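/- Let A be a strongly-fibred attractor of the IFS F with basin B(A), let x_0 ∈ B(A) and let σ ∈ Σ^∞ be disjunctive. Then C_∞(x_0,σ) = A; that is, the tails {x_n : n ≥ p} of the chaos game orbit converge to A in the Hausdorff metric as p → ∞, and A = ⋂_{p≥1} closure({x_n : n ≥ p}). -/

import Mathlib

open Metric Filter Set MeasureTheory

variable {X : Type*} [MetricSpace X] [CompleteSpace X]
variable {Λ : Type*} [Fintype Λ] [Nonempty Λ]

/-- The Hutchinson operator of the IFS given by the maps `f a`, `a : Λ`. -/
def Hutch (f : Λ → X → X) (B : Set X) : Set X := ⋃ a : Λ, f a '' B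

/-- `A` attracts, under iteration of the Hutchinson operator, every nonempty
compact subset of `U`, in the Hausdorff metric. -/
def Attracts (f : Λ → X → X) (A U : Set X) : Prop :=
  ∀ B : Set X, B.Nonempty → IsCompact B → B ⊆ U →
    Tendsto (fun k : ℕ => hausdorffDist ((Hutch f)^[k] B) A) atTop (nhds 0)

/-- `A` is an attractor of the IFS `f`: a nonempty compact set admitting an open
neighbourhood `U ⊇ A` all of whose nonempty compact subsets are attracted to `A`. -/
def IsAttractor (f : Λ → X → X) (A : Set X) : Prop :=
  A.Nonempty ∧ IsCompact A ∧ ∃ U : Set X, IsOpen U ∧ A ⊆ U ∧ Attracts f A U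

/-- The basin of the attractor `A`: the union of all open `U ⊇ A` from which `A` attracts. -/
def basin (f : Λ → X → X) (A : Set X) : Set X :=
  ⋃₀ {U : Set X | IsOpen U ∧ A ⊆ U ∧ Attracts f A U}

/-- The chaos game orbit of `x₀` driven by the sequence `σ` (0-indexed: `σ 0` acts first). -/
def orbit (f : Λ → X → X) (σ : ℕ → Λ) (x₀ : X) : ℕ → X
  | 0 => x₀
  | k + 1 => f (σ k) (orbit f σ x₀ k)

/-- `C_K(x₀,σ)`: the closure of the tail `{x_k : k ≥ K}` of the chaos game orbit. -/
def tailSet (f : Λ → X → X) (σ : ℕ → Λ) (x₀ : X) (K : ℕ) : Set X :=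
  closure {y : X | ∃ k : ℕ, K ≤ k ∧ orbit f σ x₀ k = y}

/-- `C_∞(x₀,σ) = ⋂_K C_K(x₀,σ)`. -/
def Cinf (f : Λ → X → X) (σ : ℕ → Λ) (x₀ : X) : Set X :=
  ⋂ K : ℕ, tailSet f σ x₀ K

/-- For a word `w = (σ₁, …, σ_m)`, `wordApply f w = f_{σ_m} ∘ ⋯ ∘ f_{σ_1}`
(the letter `w 0` acts first). -/
def wordApply (f : Λ → X → X) {m : ℕ} (w : Fin m → Λ) (x : X) : X :=
  (List.ofFn w).foldl (fun y a => f a y) x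

/-- A sequence of symbols is disjunctive if it contains every finite word
as a block of consecutive letters. -/
def Disjunctive {Γ : Type*} (σ : ℕ → Γ) : Prop :=
  ∀ (m : ℕ) (w : Fin m → Γ), ∃ j : ℕ, ∀ l : Fin m, σ (j + l.1) = w l

/-- `fibreComp f ρ K = f_{ρ_1} ∘ f_{ρ_2} ∘ ⋯ ∘ f_{ρ_K}` (0-indexed: `f (ρ 0) ∘ ⋯ ∘ f (ρ (K-1))`). -/
def fibreComp (f : Λ → X → X) (ρ : ℕ → Λ) : ℕ → X → X
  | 0 => id
  | K + 1 => fibreComp f ρ K ∘ f (ρ K)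

/-- The fibre `A_ρ = ⋂_{K ≥ 1} f_{ρ_1} ∘ ⋯ ∘ f_{ρ_K}(A)` of the attractor `A`. -/
def fibre (f : Λ → X → X) (A : Set X) (ρ : ℕ → Λ) : Set X :=
  ⋂ K : ℕ, fibreComp f ρ (K + 1) '' A

/-- `A` is strongly fibred: every open set meeting `A` contains a fibre. -/
def StronglyFibred (f : Λ → X → X) (A : Set X) : Prop :=
  ∀ U : Set X, IsOpen U → (U ∩ A).Nonempty → ∃ ρ : ℕ → Λ, fibre f A ρ ⊆ U


section Aux

variable {X : Type*} [MetricSpace X] [CompleteSpace X]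
variable {Λ : Type*} [Fintype Λ] [Nonempty Λ]

lemma hutch_isCompact (f : Λ → X → X) (hf : ∀ a : Λ, Continuous (f a)) {B : Set X}
    (hB : IsCompact B) : IsCompact (Hutch f B) :=
  isCompact_iUnion fun a => hB.image (hf a)

lemma hutch_nonempty (f : Λ → X → X) {B : Set X} (hB : B.Nonempty) : (Hutch f B).Nonempty := by
  obtain ⟨x, hx⟩ := hB
  obtain ⟨a⟩ := ‹Nonempty Λ›
  exact ⟨f a x, mem_iUnion.2 ⟨a, x, hx, rfl⟩⟩

lemma iterate_hutch_isCompact (f : Λ → X → X) (hf : ∀ a : Λ, Continuous (f a)) {B : Set X}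
    (hB : IsCompact B) : ∀ k : ℕ, IsCompact ((Hutch f)^[k] B)
  | 0 => hB
  | k + 1 => by
    rw [Function.iterate_succ_apply']
    exact hutch_isCompact f hf (iterate_hutch_isCompact f hf hB k)

lemma iterate_hutch_nonempty (f : Λ → X → X) {B : Set X}
    (hB : B.Nonempty) : ∀ k : ℕ, ((Hutch f)^[k] B).Nonempty
  | 0 => hB
  | k + 1 => by
    rw [Function.iterate_succ_apply']
    exact hutch_nonempty f (iterate_hutch_nonempty f hB k)

lemma orbit_mem_iterate (f : Λ → X → X) (σ : ℕ → Λ) (x₀ : X) :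
    ∀ k : ℕ, orbit f σ x₀ k ∈ (Hutch f)^[k] ({x₀} : Set X)
  | 0 => rfl
  | k + 1 => by
    rw [Function.iterate_succ_apply']
    exact mem_iUnion.2 ⟨σ k, orbit f σ x₀ k, orbit_mem_iterate f σ x₀ k, rfl⟩

lemma infDist_orbit_tendsto (f : Λ → X → X) (hf : ∀ a : Λ, Continuous (f a))
    {A : Set X} (hA : IsAttractor f A) {x₀ : X} (hx₀ : x₀ ∈ basin f A) (σ : ℕ → Λ) :
    Tendsto (fun k : ℕ => infDist (orbit f σ x₀ k) A) atTop (nhds 0) := by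
  obtain ⟨U, ⟨hUo, hAU, hattr⟩, hxU⟩ := hx₀
  have h := hattr {x₀} ⟨x₀, rfl⟩ isCompact_singleton (singleton_subset_iff.2 hxU)
  refine squeeze_zero (fun k => infDist_nonneg) (fun k => ?_) h
  exact infDist_le_hausdorffDist_of_mem (orbit_mem_iterate f σ x₀ k)
    (hausdorffEdist_ne_top_of_nonempty_of_bounded
      (iterate_hutch_nonempty f (singleton_nonempty x₀) k) hA.1
      (iterate_hutch_isCompact f hf isCompact_singleton k).isBounded hA.2.1.isBounded)

lemma hutch_subset_self (f : Λ → X → X) (hf : ∀ a : Λ, Continuous (f a))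
    {A : Set X} (hA : IsAttractor f A) : Hutch f A ⊆ A := by
  obtain ⟨hne, hcomp, U, hUo, hAU, hattr⟩ := hA
  have h := hattr A hne hcomp hAU
  intro y hy
  rw [Hutch, mem_iUnion] at hy
  obtain ⟨a, x, hxA, rfl⟩ := hy
  set S : ℕ → Set X := fun k => (Hutch f)^[k] A with hS
  have hScomp : ∀ k, IsCompact (S k) := iterate_hutch_isCompact f hf hcomp
  have hSne : ∀ k, (S k).Nonempty := iterate_hutch_nonempty f hne
  have hedist : ∀ k, EMetric.hausdorffEdist (S k) A ≠ ⊤ := fun k =>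
    hausdorffEdist_ne_top_of_nonempty_of_bounded (hSne k) hne
      (hScomp k).isBounded hcomp.isBounded
  have key : ∀ ε > (0:ℝ), infDist (f a x) A < ε := by
    intro ε hε
    obtain ⟨δ, hδ, hcont⟩ :=
      Metric.continuous_iff.1 (hf a) x (ε/2) (by linarith)
    rw [Metric.tendsto_atTop] at h
    obtain ⟨N, hN⟩ := h (min δ (ε/2)) (lt_min hδ (by linarith))
    have hdN : hausdorffDist (S N) A < min δ (ε/2) := by
      have := hN N le_rfl
      rwa [Real.dist_eq, sub_zero, abs_of_nonneg hausdorffDist_nonneg] at this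
    have hdN1 : hausdorffDist (S (N+1)) A < min δ (ε/2) := by
      have := hN (N+1) (Nat.le_succ N)
      rwa [Real.dist_eq, sub_zero, abs_of_nonneg hausdorffDist_nonneg] at this
    have hx' : infDist x (S N) ≤ hausdorffDist (S N) A := by
      rw [hausdorffDist_comm] at hdN ⊢
      exact infDist_le_hausdorffDist_of_mem hxA (by rw [EMetric.hausdorffEdist_comm]; exact hedist N)
    obtain ⟨z, hzS, hz⟩ := (hScomp N).exists_infDist_eq_dist (hSne N) x
    have hxz : dist z x < δ := by
      rw [dist_comm, ← hz]
      exact lt_of_le_of_lt hx' (lt_of_lt_of_le hdN (min_le_left _ _))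
    have hfz : f a z ∈ S (N+1) := by
      rw [hS]
      simp only [Function.iterate_succ_apply']
      exact mem_iUnion.2 ⟨a, z, hzS, rfl⟩
    have h1 : infDist (f a x) A ≤ infDist (f a z) A + dist (f a x) (f a z) :=
      infDist_le_infDist_add_dist
    have h2 : infDist (f a z) A ≤ hausdorffDist (S (N+1)) A :=
      infDist_le_hausdorffDist_of_mem hfz (hedist (N+1))
    have h3 : dist (f a x) (f a z) < ε/2 := by rw [dist_comm]; exact hcont z hxz
    have h4 : hausdorffDist (S (N+1)) A < ε/2 :=
      lt_of_lt_of_le hdN1 (min_le_right _ _)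
    linarith
  have : infDist (f a x) A = 0 := by
    by_contra hc
    have hpos : 0 < infDist (f a x) A := lt_of_le_of_ne infDist_nonneg (Ne.symm hc)
    exact absurd (key _ hpos) (lt_irrefl _)
  exact (hcomp.isClosed.mem_iff_infDist_zero hne).2 this

lemma fibreComp_continuous (f : Λ → X → X) (hf : ∀ a : Λ, Continuous (f a)) (ρ : ℕ → Λ) :
    ∀ K : ℕ, Continuous (fibreComp f ρ K)
  | 0 => continuous_id
  | K + 1 => (fibreComp_continuous f hf ρ K).comp (hf (ρ K))

lemma fibreComp_image_antitone (f : Λ → X → X) {A : Set X} (hinv : Hutch f A ⊆ A) (ρ : ℕ → Λ) :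
    Antitone (fun K : ℕ => fibreComp f ρ (K + 1) '' A) := by
  apply antitone_nat_of_succ_le
  intro K
  have hsub : f (ρ (K+1)) '' A ⊆ A := fun y hy => by
    obtain ⟨x, hx, rfl⟩ := hy
    exact hinv (mem_iUnion.2 ⟨ρ (K+1), x, hx, rfl⟩)
  calc fibreComp f ρ (K + 2) '' A
      = fibreComp f ρ (K + 1) '' (f (ρ (K+1)) '' A) := by
        rw [show fibreComp f ρ (K + 2) = fibreComp f ρ (K+1) ∘ f (ρ (K+1)) from rfl,
          image_comp]
    _ ⊆ fibreComp f ρ (K + 1) '' A := image_mono hsub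

lemma orbit_add_eq_fibreComp (f : Λ → X → X) (σ : ℕ → Λ) (x₀ : X) (ρ : ℕ → Λ) :
    ∀ (K j : ℕ), (∀ i < K, σ (j + i) = ρ (K - 1 - i)) →
      orbit f σ x₀ (j + K) = fibreComp f ρ K (orbit f σ x₀ j)
  | 0, j, _ => rfl
  | K + 1, j, h => by
    have h1 : orbit f σ x₀ (j + (K + 1)) = orbit f σ x₀ ((j + 1) + K) := by
      congr 1; omega
    have h2 : ∀ i < K, σ ((j + 1) + i) = ρ (K - 1 - i) := by
      intro i hi
      have := h (i + 1) (by omega)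
      rw [show j + (i + 1) = (j + 1) + i by omega] at this
      rw [this]
      exact congrArg ρ (by omega)
    have h3 : σ j = ρ K := by
      have := h 0 (by omega)
      rw [Nat.add_zero] at this
      rw [this]; exact congrArg ρ (by omega)
    rw [h1, orbit_add_eq_fibreComp f σ x₀ ρ K (j+1) h2]
    show fibreComp f ρ K (orbit f σ x₀ (j + 1)) = (fibreComp f ρ K ∘ f (ρ K)) (orbit f σ x₀ j)
    rw [show orbit f σ x₀ (j + 1) = f (σ j) (orbit f σ x₀ j) from rfl, h3]
    rfl

lemma attractor_subset_tailSet (f : Λ → X → X) (hf : ∀ a : Λ, Continuous (f a))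
    {A : Set X} (hA : IsAttractor f A) (hsf : StronglyFibred f A)
    {x₀ : X} (hx₀ : x₀ ∈ basin f A) {σ : ℕ → Λ} (hσ : Disjunctive σ) (p : ℕ) :
    A ⊆ tailSet f σ x₀ p := by
  intro a ha
  rw [tailSet, Metric.mem_closure_iff]
  intro ε hε
  obtain ⟨ρ, hρ⟩ := hsf (ball a ε) isOpen_ball ⟨a, mem_ball_self hε, ha⟩
  have hinv := hutch_subset_self f hf hA
  have hne := hA.1
  have hcomp := hA.2.1
  -- find m with fibreComp f ρ (m+1) '' A ⊆ ball a ε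
  have hmono := fibreComp_image_antitone f hinv ρ
  have hexm : ∃ m : ℕ, fibreComp f ρ (m + 1) '' A ⊆ ball a ε := by
    by_contra hc
    push_neg at hc
    replace hc : ∀ K : ℕ, ∃ y ∈ fibreComp f ρ (K + 1) '' A, y ∉ ball a ε :=
      fun K => Set.not_subset.1 (hc K)
    set t : ℕ → Set X := fun K => fibreComp f ρ (K + 1) '' A ∩ (ball a ε)ᶜ with ht
    have htcomp : ∀ K, IsCompact (t K) := fun K =>
      ((hcomp.image (fibreComp_continuous f hf ρ (K+1))).inter_right
        isOpen_ball.isClosed_compl)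
    have htne : ∀ K, (t K).Nonempty := fun K => by
      obtain ⟨y, hy1, hy2⟩ := hc K
      exact ⟨y, hy1, hy2⟩
    have htdir : Directed (· ⊇ ·) t := by
      intro i j
      rcases le_total i j with h | h
      · exact ⟨j, inter_subset_inter_left _ (hmono h), subset_rfl⟩
      · exact ⟨i, subset_rfl, inter_subset_inter_left _ (hmono h)⟩
    obtain ⟨y, hy⟩ := IsCompact.nonempty_iInter_of_directed_nonempty_isCompact_isClosed
      t htdir htne htcomp (fun K => (htcomp K).isClosed)
    have hy1 : y ∈ fibre f A ρ := mem_iInter.2 fun K => (mem_iInter.1 hy K).1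
    exact (mem_iInter.1 hy 0).2 (hρ hy1)
  obtain ⟨m, hm⟩ := hexm
  set g : X → X := fibreComp f ρ (m + 1) with hg
  have hApre : A ⊆ g ⁻¹' ball a ε := image_subset_iff.1 hm
  obtain ⟨δ, hδ, hthick⟩ := hcomp.exists_thickening_subset_open
    ((fibreComp_continuous f hf ρ (m+1)).isOpen_preimage _ isOpen_ball) hApre
  have htend := infDist_orbit_tendsto f hf hA hx₀ σ
  rw [Metric.tendsto_atTop] at htend
  obtain ⟨N₀, hN₀⟩ := htend δ hδ
  set N := max N₀ p with hN
  -- disjunctivity: find block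
  obtain ⟨aΛ⟩ := ‹Nonempty Λ›
  set w : Fin (N + (m + 1)) → Λ := fun l => if h : N ≤ l.1 then ρ (m - (l.1 - N)) else aΛ with hw
  obtain ⟨j₀, hj₀⟩ := hσ (N + (m + 1)) w
  set j := j₀ + N with hj
  have hblock : ∀ i < m + 1, σ (j + i) = ρ ((m + 1) - 1 - i) := by
    intro i hi
    have hlt : N + i < N + (m + 1) := by omega
    have := hj₀ ⟨N + i, hlt⟩
    rw [show j₀ + (N + i) = j + i by omega] at this
    rw [this, hw]
    simp only
    rw [dif_pos (by omega : N ≤ N + i)]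
    exact congrArg ρ (by omega)
  have horbit : orbit f σ x₀ (j + (m + 1)) = g (orbit f σ x₀ j) :=
    orbit_add_eq_fibreComp f σ x₀ ρ (m + 1) j hblock
  have hjN : infDist (orbit f σ x₀ j) A < δ := by
    have := hN₀ j (le_trans (le_max_left N₀ p) (Nat.le_add_left N j₀))
    rwa [Real.dist_eq, sub_zero, abs_of_nonneg infDist_nonneg] at this
  have hthm : orbit f σ x₀ j ∈ thickening δ A :=
    (mem_thickening_iff_infDist_lt hne).2 hjN
  have hin : g (orbit f σ x₀ j) ∈ ball a ε := hthick hthm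
  refine ⟨orbit f σ x₀ (j + (m + 1)), ⟨j + (m + 1), ?_, rfl⟩, ?_⟩
  · exact le_trans (le_max_right N₀ p)
      (le_trans (Nat.le_add_left N j₀) (Nat.le_add_right j (m + 1)))
  · rw [horbit, dist_comm]
    exact hin

end Aux

/-- Corollary 1: if `A` is a strongly-fibred attractor and `σ` is
disjunctive, then `C_∞(x₀,σ) = A`: the tails of the chaos game orbit converge to `A`
in the Hausdorff metric and `A = ⋂_p closure {x_n : n ≥ p}`. -/
theorem chaosGame_stronglyFibred_Cinf_eq_attractor
    (f : Λ → X → X) (hf : ∀ a : Λ, Continuous (f a))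
    (A : Set X) (hA : IsAttractor f A) (hsf : StronglyFibred f A)
    (x₀ : X) (hx₀ : x₀ ∈ basin f A)
    (σ : ℕ → Λ) (hσ : Disjunctive σ) :
    Cinf f σ x₀ = A ∧
    Tendsto (fun p : ℕ => hausdorffDist (tailSet f σ x₀ p) A) atTop (nhds 0) ∧
    A = ⋂ p : ℕ, tailSet f σ x₀ p := by
  have hAtail : ∀ p : ℕ, A ⊆ tailSet f σ x₀ p :=
    attractor_subset_tailSet f hf hA hsf hx₀ hσ
  have htend := infDist_orbit_tendsto f hf hA hx₀ σ
  have hclosed : ∀ r : ℝ, IsClosed {y : X | infDist y A ≤ r} := fun r =>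
    isClosed_le (continuous_infDist_pt A) continuous_const
  have htail_bound : ∀ (r : ℝ) (p : ℕ), (∀ k ≥ p, infDist (orbit f σ x₀ k) A ≤ r) →
      ∀ y ∈ tailSet f σ x₀ p, infDist y A ≤ r := by
    intro r p hk y hy
    have : tailSet f σ x₀ p ⊆ {y : X | infDist y A ≤ r} := by
      apply closure_minimal _ (hclosed r)
      rintro z ⟨k, hkp, rfl⟩
      exact hk k hkp
    exact this hy
  rw [Metric.tendsto_atTop] at htend
  have hCA : Cinf f σ x₀ = A := by
    apply Subset.antisymm
    · intro y hy
      have hle : ∀ ε > (0:ℝ), infDist y A ≤ ε := by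
        intro ε hε
        obtain ⟨N, hN⟩ := htend ε hε
        have : ∀ k ≥ N, infDist (orbit f σ x₀ k) A ≤ ε := by
          intro k hk
          have := hN k hk
          rw [Real.dist_eq, sub_zero, abs_of_nonneg infDist_nonneg] at this
          exact this.le
        exact htail_bound ε N this y (mem_iInter.1 hy N)
      have : infDist y A = 0 := by
        refine le_antisymm ?_ infDist_nonneg
        by_contra hc
        push_neg at hc
        exact absurd (hle _ hc) (not_le.2 (by linarith [hle (infDist y A / 2) (by linarith)]))
      exact (hA.2.1.isClosed.mem_iff_infDist_zero hA.1).2 this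
    · exact subset_iInter fun p => hAtail p
  refine ⟨hCA, ?_, hCA.symm⟩
  rw [Metric.tendsto_atTop]
  intro ε hε
  obtain ⟨N, hN⟩ := htend (ε/2) (by linarith)
  refine ⟨N, fun p hp => ?_⟩
  have hbound : hausdorffDist (tailSet f σ x₀ p) A ≤ ε/2 := by
    apply hausdorffDist_le_of_infDist (by linarith)
    · intro y hy
      refine htail_bound (ε/2) p (fun k hk => ?_) y hy
      have := hN k (le_trans hp hk)
      rw [Real.dist_eq, sub_zero, abs_of_nonneg infDist_nonneg] at this
      exact this.le
    · intro x hx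
      have : infDist x (tailSet f σ x₀ p) = 0 :=
        infDist_zero_of_mem (hAtail p hx)
      linarith
  rw [Real.dist_eq, sub_zero, abs_of_nonneg hausdorffDist_nonneg]
  linarith
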